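/- Let G be a compact connected Lie group with π₁(G,1) torsion-free, let H be a connected and simply connected topological group, and let q : H → G be a continuous surjective group homomorphism that is a covering map. Fix r ∈ ℕ and let Q be the quotient of H^r (= Fin r → H) by the simultaneous conjugation action of H, with the quotient topology. The group (ker q)^r acts on Q by coordinatewise multiplication, k · [h₁,…,h_r] = [k₁h₁,…,k_r h_r] (this is well defined because ker q is central in H). This action is properly discontinuous in the strong sense: every point of Q has an open neighborhood U such that k · U ∩ U = ∅ for every k ∈ (ker q)^r with k ≠ 1. -/

import Mathlib

open scoped Manifold

set_option linter.unusedSectionVars false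
set_option maxHeartbeats 1000000

/-- The orbit equivalence relation of the simultaneous conjugation action of a group `H`
on `Fin r → H`: two tuples are equivalent iff some single element of `H` conjugates one
to the other in every coordinate. -/
def simConjSetoid (r : ℕ) (H : Type*) [Group H] : Setoid (Fin r → H) where
  r f₁ f₂ := ∃ h : H, (fun i => h * f₂ i * h⁻¹) = f₁
  iseqv := by
    constructor
    · intro f
      exact ⟨1, by simp⟩
    · rintro f₁ f₂ ⟨h, rfl⟩
      refine ⟨h⁻¹, ?_⟩
      funext i
      group
    · rintro f₁ f₂ f₃ ⟨h₁, rfl⟩ ⟨h₂, rfl⟩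
      refine ⟨h₁ * h₂, ?_⟩
      funext i
      group

/-- `Monoid.IsTorsionFree` with its old Mathlib meaning (removed from Mathlib). -/
def Monoid.IsTorsionFree (G : Type*) [Monoid G] : Prop :=
  ∀ g : G, g ≠ 1 → ¬IsOfFinOrder g


namespace Statement2Aux

open scoped unitInterval
open CategoryTheory Topology Filter

/-- Iterated concatenation of a path from `1` to `z`, giving a path from `1` to `z ^ n`. -/
noncomputable def pPow {H : Type*} [Group H] [TopologicalSpace H] [IsTopologicalGroup H]
    {z : H} (δ : Path (1:H) z) : (n : ℕ) → Path (1:H) (z ^ n)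
  | 0 => (Path.refl (1:H)).cast rfl (pow_zero z)
  | n+1 => δ.trans (((pPow δ n).map (continuous_mul_left z)).cast
      (by simp) (by rw [pow_succ']))


section
variable {G : Type*} [TopologicalSpace G] [Group G] [IsTopologicalGroup G]
variable {H : Type*} [Group H] [TopologicalSpace H] [IsTopologicalGroup H]
  [ConnectedSpace H] [SimplyConnectedSpace H]

lemma aux_isol' (q : H →* G) (hqcov : IsCoveringMap q) :
    ∃ O : Set H, IsOpen O ∧ (1:H) ∈ O ∧ ∀ z ∈ O, q z = 1 → z = 1 := by
  haveI := (hqcov 1).1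
  have h1 : ((1:H) : H) ∈ (q ⁻¹' {1} : Set H) := by simp
  have : IsOpen ({(⟨1, h1⟩ : (q ⁻¹' {1} : Set H))} : Set (q ⁻¹' {1} : Set H)) :=
    isOpen_discrete _
  rw [isOpen_induced_iff] at this
  obtain ⟨O, hO, hO2⟩ := this
  refine ⟨O, hO, ?_, ?_⟩
  · have : (⟨1, h1⟩ : (q ⁻¹' {1} : Set H)) ∈ Subtype.val ⁻¹' O := by
      rw [hO2]; exact rfl
    exact this
  · intro z hz hz1
    have hzm : (⟨z, by simp [hz1]⟩ : (q ⁻¹' {1} : Set H)) ∈ Subtype.val ⁻¹' O := hz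
    rw [hO2] at hzm
    simpa using congrArg Subtype.val hzm

-- B: kernel is central

lemma aux_central' (q : H →* G) (hqcov : IsCoveringMap q) {z : H} (hz : q z = 1) (h : H) :
    h * z = z * h := by
  haveI := (hqcov 1).1
  have key : h * z * h⁻¹ = 1 * z * 1⁻¹ := by
    refine IsPreconnected.constant_of_mapsTo (S := (Set.univ : Set H))
      isPreconnected_univ (f := fun h => h * z * h⁻¹) (T := q ⁻¹' {1})
      (isDiscrete_iff_discreteTopology.mpr ‹_›) ?_ ?_ trivial trivial
    · fun_prop
    · intro a _
      simp [Set.mem_preimage, map_mul, hz]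
  have : h * z * h⁻¹ = z := by simpa using key
  calc h * z = (h * z * h⁻¹) * h := by group
  _ = z * h := by rw [this]

lemma aux_section' {q : H → G} (hqcov : IsCoveringMap q) (x : G) (h₀ : H) (hh₀ : q h₀ = x) :
    ∃ (s : G → H) (U : Set G), IsOpen U ∧ x ∈ U ∧ ContinuousOn s U ∧
      (∀ u ∈ U, q (s u) = u) ∧ s x = h₀ := by
  obtain ⟨hd, t, hxt⟩ := hqcov x
  haveI := hd
  haveI : Nonempty (q ⁻¹' {x}) := ⟨⟨h₀, hh₀⟩⟩
  set T := (hqcov x).toTrivialization with hT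
  have hxT : x ∈ T.baseSet := (hqcov x).mem_toTrivialization_baseSet
  have hsrc : h₀ ∈ T.source := T.mem_source.mpr (by rw [hh₀]; exact hxT)
  refine ⟨fun u => T.toPartialHomeomorph.symm (u, (T h₀).2), T.baseSet,
    T.open_baseSet, hxT, ?_, ?_, ?_⟩
  · apply T.toPartialHomeomorph.continuousOn_symm.comp
    · exact (continuous_id.prodMk continuous_const).continuousOn
    · intro u hu
      rw [T.target_eq]
      exact ⟨hu, trivial⟩
  · intro u hu
    exact T.proj_symm_apply' hu
  · subst hh₀
    exact T.symm_apply_mk_proj hsrc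

lemma aux_torsionfree' (htf : Monoid.IsTorsionFree (FundamentalGroup G (1 : G)))
    (q : H →* G) (hqc : Continuous q) (hqcov : IsCoveringMap ⇑q)
    {z : H} (hz : q z = 1) {n : ℕ} (hn : 0 < n) (hzn : z ^ n = 1) : z = 1 := by
  classical
  -- a path from 1 to z in H
  obtain ⟨δ⟩ : Joined (1:H) z := PathConnectedSpace.joined 1 z
  -- the loop in G
  let γ : Path (1:G) 1 := ⟨⟨fun t => q (δ t), by fun_prop⟩, by simp, by simp [hz]⟩
  -- loops gPow j : projections of pPow δ j
  have hqpow : ∀ j : ℕ, q (z ^ j) = 1 := fun j => by rw [map_pow, hz, one_pow]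
  let gP : ℕ → Path (1:G) 1 := fun j =>
    ⟨⟨fun t => q (pPow δ j t), by fun_prop⟩, by simp, by simp [hqpow j]⟩
  -- the fundamental group element
  let α : FundamentalGroup G (1:G) := FundamentalGroup.fromPath (X := TopCat.of G) ⟦γ⟧
  have hα : ∀ j : ℕ, (α ^ j) = FundamentalGroup.fromPath ⟦gP j⟧ := by
    intro j
    induction j with
    | zero =>
      have : gP 0 = Path.refl (1:G) := by
        ext t
        show q ((pPow δ 0) t) = 1
        show q (((Path.refl (1:H)).cast rfl (pow_zero z)) t) = 1
        rw [Path.cast_coe]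
        simp [Path.refl]
      rw [pow_zero, this]
      rfl
    | succ j ih =>
      have hsplit : gP (j+1) = γ.trans (gP j) := by
        ext t
        show q ((pPow δ (j+1)) t) = (γ.trans (gP j)) t
        show q ((δ.trans _) t) = _
        rw [Path.trans_apply, Path.trans_apply]
        split_ifs with h
        · rfl
        · rw [Path.cast_coe, Path.map_coe]
          show q (z * (pPow δ j) _) = _
          rw [map_mul, hz, one_mul]
          rfl
      rw [pow_succ]
      show (α ≫ (α ^ j)) = _
      rw [ih]
      show Path.Homotopic.Quotient.trans ⟦γ⟧ ⟦gP j⟧ = _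
      rw [hsplit]; rfl
  -- α ^ n = 1
  have hαn : α ^ n = 1 := by
    rw [hα n]
    show _ = 𝟙 (FundamentalGroupoid.mk (1:G))
    rw [FundamentalGroupoid.id_eq_path_refl]
    apply Quotient.sound
    -- gP n is homotopic to refl: project a homotopy from H
    let Lp : Path (1:H) 1 := ⟨⟨fun t => pPow δ n t, by fun_prop⟩, by simp, by simp [hzn]⟩
    have hLp : Path.Homotopic Lp (Path.refl (1:H)) :=
      SimplyConnectedSpace.paths_homotopic _ _
    obtain ⟨Ht⟩ := hLp
    refine ⟨⟨⟨⟨fun p => q (Ht p), by fun_prop⟩, ?_, ?_⟩, ?_⟩⟩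
    · intro x
      show q (Ht (0, x)) = _
      rw [Ht.apply_zero]
      rfl
    · intro x
      show q (Ht (1, x)) = _
      rw [Ht.apply_one]; exact map_one q
    · intro t x hx
      show q (Ht (t, x)) = _
      rw [Ht.eq_fst t hx]
      rfl
  -- torsion-freeness gives α = 1
  have hα1 : α = 1 := by
    by_contra hne
    exact htf α hne (isOfFinOrder_iff_pow_eq_one.mpr ⟨n, hn, hαn⟩)
  -- hence γ is null-homotopic
  have hγ : Path.Homotopic γ (Path.refl (1:G)) := by
    have : α = (1 : FundamentalGroup G (1:G)) := by rw [hα1]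
    have h2 : (⟦γ⟧ : Path.Homotopic.Quotient (1:G) 1) = ⟦Path.refl 1⟧ := by
      rw [show (⟦γ⟧ : Path.Homotopic.Quotient (1:G) 1) = FundamentalGroup.toPath α from rfl, this]
      rfl
    exact Quotient.exact h2
  obtain ⟨F⟩ := hγ
  -- a local section at 1
  obtain ⟨s₁, W, hWopen, hW1, hs₁cont, hs₁sect, hs₁1⟩ := aux_section' hqcov 1 1 (map_one q)
  have hFc : Continuous fun p : I × I => F p := F.continuous
  have hFcomp : ∀ c : I, Continuous fun t : I => F (t, c) :=
    fun c => hFc.comp (continuous_id.prodMk continuous_const)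
  -- uniform subdivision size
  have hΔopen : IsOpen {y : (I × I) × I | (F (y.1.1, y.1.2))⁻¹ * F (y.1.1, y.2) ∈ W} := by
    refine hWopen.preimage ?_
    exact ((hFc.comp ((continuous_fst.comp continuous_fst).prodMk
      (continuous_snd.comp continuous_fst))).inv).mul
      (hFc.comp ((continuous_fst.comp continuous_fst).prodMk continuous_snd))
  have hDgcpt : IsCompact ((fun p : I × I => ((p, p.2) : (I × I) × I)) '' Set.univ) :=
    isCompact_univ.image (continuous_id.prodMk continuous_snd)
  obtain ⟨ε, hε, hthick⟩ := hDgcpt.exists_thickening_subset_open hΔopen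
    (by rintro y ⟨p, -, rfl⟩; simp only [Set.mem_setOf_eq]; rw [inv_mul_cancel]; exact hW1)
  obtain ⟨N₀, hN₀⟩ := exists_nat_one_div_lt hε
  set N : ℕ := N₀ + 1 with hNdef
  have hNpos : 0 < N := Nat.succ_pos _
  have hNR : (0:ℝ) < N := by exact_mod_cast hNpos
  have hN : 1 / (N:ℝ) < ε := by
    have : ((N:ℝ)) = (N₀:ℝ) + 1 := by push_cast [hNdef]; ring
    rw [this]; exact hN₀
  have key : ∀ (t s s' : I), |(s':ℝ) - (s:ℝ)| ≤ 1/N →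
      (F (t, s))⁻¹ * F (t, s') ∈ W := by
    intro t s s' hss
    have hmem : (((t, s), s') : (I × I) × I) ∈ Metric.thickening ε
        ((fun p : I × I => ((p, p.2) : (I × I) × I)) '' Set.univ) := by
      rw [Metric.mem_thickening_iff]
      refine ⟨((t, s), s), ⟨(t, s), trivial, rfl⟩, ?_⟩
      have h1 : dist (((t, s), s') : (I × I) × I) ((t, s), s) = |(s':ℝ) - (s:ℝ)| := by
        rw [Prod.dist_eq]
        simp only [dist_self]
        rw [Subtype.dist_eq, Real.dist_eq]
        exact max_eq_right (abs_nonneg _)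
      rw [h1]
      exact lt_of_le_of_lt hss hN
    exact hthick hmem
  -- grid points
  set ui : ℕ → I := fun j => Set.projIcc (0:ℝ) 1 zero_le_one ((j:ℝ)/N) with huidef
  have hui : ∀ j, j ≤ N → ((ui j : ℝ)) = (j:ℝ)/N := by
    intro j hj
    rw [huidef]
    simp only [Set.coe_projIcc]
    rw [min_eq_right, max_eq_right]
    · positivity
    · rw [div_le_one hNR]; exact_mod_cast hj
  have hui0 : ui 0 = 0 := by
    apply Subtype.ext
    rw [hui 0 (Nat.zero_le N)]
    norm_num
  have huiN : ui N = 1 := by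
    apply Subtype.ext
    rw [hui N le_rfl]
    field_simp
    simp
  -- boundary values of F
  have hF0 : ∀ s : I, F (0, s) = q (δ s) := fun s => F.apply_zero s
  have hF1 : ∀ s : I, F (1, s) = 1 := fun s => F.apply_one s
  have hFt0 : ∀ t : I, F (t, 0) = 1 := by
    intro t
    have := F.eq_fst t (show (0:I) ∈ ({0,1} : Set I) by simp)
    simpa [δ.source] using this
  have hFt1 : ∀ t : I, F (t, 1) = 1 := by
    intro t
    have := F.eq_fst t (show (1:I) ∈ ({0,1} : Set I) by simp)
    simpa [δ.target, hz] using this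
  -- the partial products
  set P : ℕ → I → H := fun j => Nat.rec (fun _ => (1:H))
    (fun j Pj t => Pj t * s₁ ((F (t, ui j))⁻¹ * F (t, ui (j+1)))) j with hPdef
  have hstep : ∀ (j : ℕ) (t : I),
      P (j+1) t = P j t * s₁ ((F (t, ui j))⁻¹ * F (t, ui (j+1))) := fun j t => rfl
  have hincr : ∀ j, j + 1 ≤ N → ∀ t : I, (F (t, ui j))⁻¹ * F (t, ui (j+1)) ∈ W := by
    intro j hj t
    apply key
    rw [hui j (by omega), hui (j+1) hj]
    have : ((j+1:ℕ):ℝ)/N - (j:ℝ)/N = 1/N := by push_cast; ring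
    rw [this, abs_of_nonneg (by positivity)]
  have hPcont : ∀ j, j ≤ N → Continuous (P j) := by
    intro j
    induction j with
    | zero => intro _; exact continuous_const
    | succ j ih =>
      intro hj
      refine (ih (by omega)).mul (hs₁cont.comp_continuous ?_ (hincr j hj))
      exact ((hFcomp (ui j)).inv).mul (hFcomp (ui (j+1)))
  have hPq : ∀ j, j ≤ N → ∀ t : I, q (P j t) = F (t, ui j) := by
    intro j
    induction j with
    | zero =>
      intro _ t
      show q 1 = F (t, ui 0)
      rw [map_one, hui0, hFt0]
    | succ j ih =>
      intro hj t
      rw [hstep, map_mul, ih (by omega) t, hs₁sect _ (hincr j hj t), mul_inv_cancel_left]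
  have hP1 : ∀ j, P j 1 = 1 := by
    intro j
    induction j with
    | zero => rfl
    | succ j ih =>
      rw [hstep, ih, hF1, hF1, inv_mul_cancel, hs₁1, one_mul]
  have hP0 : ∀ j, j ≤ N → P j 0 = δ (ui j) := by
    intro j
    induction j with
    | zero =>
      intro _
      show (1:H) = δ (ui 0)
      rw [hui0, δ.source]
    | succ j ih =>
      intro hj
      set aff : I → I := fun u => Set.projIcc (0:ℝ) 1 zero_le_one (((j:ℝ) + u)/N) with haffdef
      have haffc : Continuous aff := by
        apply continuous_projIcc.comp
        fun_prop
      have haffcoe : ∀ u : I, ((aff u : ℝ)) = ((j:ℝ) + u)/N := by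
        intro u
        rw [haffdef]
        simp only [Set.coe_projIcc]
        rw [min_eq_right, max_eq_right]
        · have := u.2.1; positivity
        · rw [div_le_one hNR]
          have h1 := u.2.2
          have : ((j:ℝ)) + (u:ℝ) ≤ (j:ℝ) + 1 := by linarith
          calc ((j:ℝ)) + (u:ℝ) ≤ (j:ℝ) + 1 := this
          _ ≤ (N:ℝ) := by exact_mod_cast hj
      have haff0 : aff 0 = ui j := by
        apply Subtype.ext
        rw [haffcoe 0, hui j (by omega)]
        norm_num
      have haff1 : aff 1 = ui (j+1) := by
        apply Subtype.ext
        rw [haffcoe 1, hui (j+1) hj]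
        push_cast
        norm_num
      have hargW : ∀ u : I, (F (0, ui j))⁻¹ * F (0, aff u) ∈ W := by
        intro u
        apply key
        rw [hui j (by omega), haffcoe u]
        have h2 : ((j:ℝ) + u)/N - (j:ℝ)/N = (u:ℝ)/N := by ring
        rw [h2, abs_of_nonneg (by have := u.2.1; positivity)]
        gcongr
        exact u.2.2
      have hAB : (fun u : I => δ (aff u)) =
          (fun u : I => δ (ui j) * s₁ ((F (0, ui j))⁻¹ * F (0, aff u))) := by
        apply hqcov.eq_of_comp_eq (δ.continuous.comp haffc)
          (continuous_const.mul (hs₁cont.comp_continuous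
            (((hFcomp (ui j)).inv.comp continuous_const).mul
              ((hFc.comp (continuous_const.prodMk haffc)))) hargW)) ?_ 0 ?_
        · funext u
          show q (δ (aff u)) = q (δ (ui j) * s₁ ((F (0, ui j))⁻¹ * F (0, aff u)))
          rw [map_mul]
          rw [hs₁sect _ (hargW u)]
          rw [← hF0, ← hF0, mul_inv_cancel_left]
        · show δ (aff 0) = δ (ui j) * s₁ ((F (0, ui j))⁻¹ * F (0, aff 0))
          rw [haff0, inv_mul_cancel, hs₁1, mul_one]
      have hend := congrFun hAB 1
      rw [haff1] at hend
      rw [hstep j 0, ih (by omega), ← hend]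
  -- conclude by constancy of P N on the fiber
  haveI := (hqcov 1).1
  have hconst : P N 0 = P N 1 := by
    refine IsPreconnected.constant_of_mapsTo (S := (Set.univ : Set I))
      isPreconnected_univ (T := ⇑q ⁻¹' {1}) (isDiscrete_iff_discreteTopology.mpr ‹_›) ((hPcont N le_rfl).continuousOn) ?_ trivial trivial
    intro t _
    show q (P N t) ∈ ({1} : Set G)
    rw [hPq N le_rfl t, huiN, hFt1]
    rfl
  have hz1 : δ (ui N) = 1 := (hP0 N le_rfl).symm.trans (hconst.trans (hP1 N))
  rw [huiN] at hz1
  rw [← δ.target]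
  exact hz1

end

lemma aux_t2 {E : Type*} [NormedAddCommGroup E] [NormedSpace ℝ E]
    {G : Type*} [TopologicalSpace G] [ChartedSpace E G] [Group G] [IsTopologicalGroup G] :
    T2Space G := by
  apply IsTopologicalGroup.t2Space_of_one_sep
  intro x hx
  set φ := chartAt E (1 : G) with hφ
  have h1 : (1 : G) ∈ φ.source := mem_chart_source E 1
  by_cases hxU : x ∈ φ.source
  · have hne : φ x ≠ φ 1 := fun h => hx (φ.injOn hxU h1 h)
    obtain ⟨A, B, hA, hB, hmemA, hmemB, hAB⟩ := t2_separation hne.symm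
    refine ⟨φ.source ∩ φ ⁻¹' A, ?_, ?_⟩
    · exact Filter.inter_mem (φ.open_source.mem_nhds h1)
        (φ.continuousAt h1 (hA.mem_nhds hmemA))
    · rintro ⟨-, hxA⟩
      exact Set.disjoint_iff.mp hAB ⟨hxA, hmemB⟩ 
  · exact ⟨φ.source, φ.open_source.mem_nhds h1, hxU⟩

section
variable {G : Type*} [TopologicalSpace G] [Group G] [IsTopologicalGroup G]
  [CompactSpace G]
variable {H : Type*} [Group H] [TopologicalSpace H] [IsTopologicalGroup H]
  [ConnectedSpace H] [SimplyConnectedSpace H]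

lemma aux_main [T2Space G] (htf : Monoid.IsTorsionFree (FundamentalGroup G (1 : G)))
    (q : H →* G) (hqc : Continuous ⇑q) (hqs : Function.Surjective ⇑q)
    (hqcov : IsCoveringMap ⇑q) (r : ℕ) (f : Fin r → H) :
    ∃ N : Set (Fin r → H), IsOpen N ∧ f ∈ N ∧
      ∀ (k : Fin r → H) (h : H) (g : Fin r → H), (∀ i, q (k i) = 1) → g ∈ N →
        (fun i => k i * (h * g i * h⁻¹)) ∈ N → k = fun _ => 1 := by
  classical
  obtain ⟨O, hOopen, hO1, hOisol⟩ := aux_isol' q hqcov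
  by_contra hcon
  push_neg at hcon
  -- extract counterexamples for every open neighborhood
  have hcon' : ∀ N : Set (Fin r → H), IsOpen N → f ∈ N →
      ∃ (k : Fin r → H) (h : H) (g : Fin r → H), (∀ i, q (k i) = 1) ∧ g ∈ N ∧
        ((fun i => k i * (h * g i * h⁻¹)) ∈ N) ∧ k ≠ fun _ => 1 := by
    intro N hNopen hfN
    obtain ⟨k, h, g, h1, h2, h3, h4⟩ := hcon N hNopen hfN
    exact ⟨k, h, g, h1, h2, h3, h4⟩
  -- the filter of "bad conjugators"
  set T : Set (Fin r → H) → Set G := fun N =>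
    {u | ∃ (h : H) (k : Fin r → H) (g : Fin r → H), u = q h ∧ (∀ i, q (k i) = 1) ∧
      (k ≠ fun _ => 1) ∧ g ∈ N ∧ (fun i => k i * (h * g i * h⁻¹)) ∈ N} with hTdef
  have hTmono : Monotone T := by
    rintro N N' hNN' u ⟨h, k, g, h1, h2, h3, h4, h5⟩
    exact ⟨h, k, g, h1, h2, h3, hNN' h4, hNN' h5⟩
  have hTne : ∀ N ∈ 𝓝 f, (T N).Nonempty := by
    intro N hN
    obtain ⟨N', hsub, hopen, hmem⟩ := mem_nhds_iff.mp hN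
    obtain ⟨k, h, g, h1, h2, h3, h4⟩ := hcon' N' hopen hmem
    exact ⟨q h, h, k, g, rfl, h1, h4, hsub h2, hsub h3⟩
  set F : Filter G := (𝓝 f).lift' T with hFdef
  haveI : F.NeBot := (Filter.lift'_neBot_iff hTmono).mpr hTne
  obtain ⟨c, hc⟩ := exists_clusterPt_of_compactSpace F
  have hcluster : ∀ U ∈ 𝓝 c, ∀ N ∈ 𝓝 f, (U ∩ T N).Nonempty := by
    intro U hU N hN
    have : U ∩ T N ∈ 𝓝 c ⊓ F := Filter.inter_mem_inf hU (Filter.mem_lift' hN)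
    exact hc.nonempty_of_mem this
  -- the cluster point centralizes the image tuple
  have hcZ : ∀ i, c * q (f i) * c⁻¹ = q (f i) := by
    intro i
    by_contra hne
    obtain ⟨D, D', hD, hD', hmemD, hmemD', hDD'⟩ := t2_separation hne
    have hcont : ContinuousAt (fun p : G × G => p.1 * p.2 * p.1⁻¹) (c, q (f i)) := by
      fun_prop
    have hpre : (fun p : G × G => p.1 * p.2 * p.1⁻¹) ⁻¹' D ∈ 𝓝 (c, q (f i)) :=
      hcont (hD.mem_nhds hmemD)
    rw [mem_nhds_prod_iff] at hpre
    obtain ⟨U, hU, X, hX, hsub⟩ := hpre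
    have hNmem : (fun g : Fin r → H => q (g i)) ⁻¹' (X ∩ D') ∈ 𝓝 f := by
      apply ContinuousAt.preimage_mem_nhds
      · exact (hqc.comp (continuous_apply i)).continuousAt
      · exact Filter.inter_mem hX (hD'.mem_nhds hmemD')
    obtain ⟨u, hu, h, k, g, rfl, hk, hkne, hg, hkg⟩ := hcluster U hU _ hNmem
    have e0 : ((q h, q (g i)) : G × G) ∈ U ×ˢ X := ⟨hu, hg.1⟩
    have e1 : q h * q (g i) * (q h)⁻¹ ∈ D := hsub e0
    have e2 : q (k i * (h * g i * h⁻¹)) = q h * q (g i) * (q h)⁻¹ := by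
      simp only [map_mul, map_inv, hk i, one_mul]
    have e3 : q h * q (g i) * (q h)⁻¹ ∈ D' := by rw [← e2]; exact hkg.2
    exact (Set.disjoint_iff.mp hDD') ⟨e1, e3⟩ 
  have hcZpow : ∀ (m : ℕ) (i : Fin r), c ^ m * q (f i) * (c ^ m)⁻¹ = q (f i) := by
    intro m i
    induction m with
    | zero => simp
    | succ m ih =>
      rw [pow_succ]
      calc c ^ m * c * q (f i) * (c ^ m * c)⁻¹
          = c ^ m * (c * q (f i) * c⁻¹) * (c ^ m)⁻¹ := by group
        _ = q (f i) := by rw [hcZ i]; exact ih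
  -- lift of c and its commutators with f
  obtain ⟨ℓ, hℓ⟩ := hqs c
  obtain ⟨s, U, hUopen, hcU, hscont, hssect, hsc⟩ := aux_section' hqcov c ℓ hℓ
  set μ : Fin r → H := fun i => ℓ * f i * ℓ⁻¹ * (f i)⁻¹ with hμdef
  have hμker : ∀ i, q (μ i) = 1 := by
    intro i
    have : q (μ i) = c * q (f i) * c⁻¹ * (q (f i))⁻¹ := by
      simp only [hμdef, map_mul, map_inv, hℓ]
    rw [this, hcZ i, mul_inv_cancel]
  have hμcent : ∀ i (x : H), x * μ i = μ i * x := fun i => aux_central' q hqcov (hμker i)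
  have hμcomm : ∀ (i : Fin r) (m : ℕ), ℓ ^ m * f i * (ℓ ^ m)⁻¹ * (f i)⁻¹ = μ i ^ m := by
    intro i m
    induction m with
    | zero => simp
    | succ m ih =>
      have hstep : ℓ * f i = μ i * f i * ℓ := by rw [hμdef]; group
      calc ℓ ^ (m+1) * f i * (ℓ ^ (m+1))⁻¹ * (f i)⁻¹
          = ℓ ^ m * (ℓ * f i) * ℓ⁻¹ * (ℓ ^ m)⁻¹ * (f i)⁻¹ := by rw [pow_succ]; group
        _ = ℓ ^ m * (μ i * f i * ℓ) * ℓ⁻¹ * (ℓ ^ m)⁻¹ * (f i)⁻¹ := by rw [hstep]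
        _ = ℓ ^ m * μ i * f i * (ℓ ^ m)⁻¹ * (f i)⁻¹ := by group
        _ = μ i * (ℓ ^ m * f i * (ℓ ^ m)⁻¹ * (f i)⁻¹) := by
            rw [hμcent i (ℓ ^ m)]; group
        _ = μ i * μ i ^ m := by rw [ih]
        _ = μ i ^ (m + 1) := by rw [← pow_succ']
  -- section at 1
  obtain ⟨s₁, W₁, hW₁open, hW₁1, hs₁cont, hs₁sect, hs₁1⟩ := aux_section' hqcov 1 1 (map_one q)
  -- each μ i is trivial
  have hμ1 : ∀ i, μ i = 1 := by
    -- cluster point of the powers of c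
    set F₂ : Filter G := Filter.map (fun m : ℕ => c ^ m) Filter.atTop with hF₂def
    haveI : F₂.NeBot := Filter.map_neBot
    obtain ⟨p, hp⟩ := exists_clusterPt_of_compactSpace F₂
    -- good neighborhood of 1
    set Wg : Set G := {u | u ∈ W₁ ∧ ∀ i, s₁ u * f i * (s₁ u)⁻¹ * (f i)⁻¹ ∈ O} with hWgdef
    have hWg : Wg ∈ 𝓝 (1:G) := by
      have h1 : ∀ᶠ u in 𝓝 (1:G), u ∈ W₁ := hW₁open.mem_nhds hW₁1
      have h2 : ∀ i : Fin r, ∀ᶠ u in 𝓝 (1:G), s₁ u * f i * (s₁ u)⁻¹ * (f i)⁻¹ ∈ O := by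
        intro i
        have hsc1 : ContinuousAt s₁ 1 := hs₁cont.continuousAt (hW₁open.mem_nhds hW₁1)
        have : ContinuousAt (fun u => s₁ u * f i * (s₁ u)⁻¹ * (f i)⁻¹) 1 := by fun_prop
        have hval : s₁ (1:G) * f i * (s₁ (1:G))⁻¹ * (f i)⁻¹ = 1 := by
          rw [hs₁1]; group
        have hOn : O ∈ 𝓝 ((fun u => s₁ u * f i * (s₁ u)⁻¹ * (f i)⁻¹) 1) := by
          show O ∈ 𝓝 (s₁ (1:G) * f i * (s₁ (1:G))⁻¹ * (f i)⁻¹)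
          rw [hval]
          exact hOopen.mem_nhds hO1
        exact this hOn
      have h3 : ∀ᶠ u in 𝓝 (1:G), ∀ i, s₁ u * f i * (s₁ u)⁻¹ * (f i)⁻¹ ∈ O :=
        Filter.eventually_all.mpr h2
      exact (h1.and h3)
    -- a neighborhood V of p with V⁻¹ * V ⊆ Wg
    have hdiv : ContinuousAt (fun pq : G × G => pq.1⁻¹ * pq.2) (p, p) := by fun_prop
    have hpre : (fun pq : G × G => pq.1⁻¹ * pq.2) ⁻¹' Wg ∈ 𝓝 (p, p) := by
      apply hdiv
      show Wg ∈ 𝓝 (p⁻¹ * p)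
      rw [inv_mul_cancel]
      exact hWg
    rw [mem_nhds_prod_iff] at hpre
    obtain ⟨V, hV, V', hV', hVsub⟩ := hpre
    -- find two powers in V ∩ V'
    have hVV' : V ∩ V' ∈ 𝓝 p := Filter.inter_mem hV hV'
    have hfreq : ∀ (m₀ : ℕ), ∃ m ≥ m₀, c ^ m ∈ V ∩ V' := by
      intro m₀
      have htail : {x : G | ∃ m ≥ m₀, x = c ^ m} ∈ F₂ := by
        rw [hF₂def, Filter.mem_map]
        exact Filter.mem_of_superset (Filter.mem_atTop m₀) (fun m hm => ⟨m, hm, rfl⟩)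
      have := hp.nonempty_of_mem (Filter.inter_mem_inf hVV' htail)
      obtain ⟨x, hx1, m, hm, rfl⟩ := this
      exact ⟨m, hm, hx1⟩
    obtain ⟨m₁, -, hm₁⟩ := hfreq 0
    obtain ⟨m₂, hm₂ge, hm₂⟩ := hfreq (m₁ + 1)
    set m := m₂ - m₁ with hmdef
    have hmpos : 0 < m := by omega
    have hpow : (c ^ m₁)⁻¹ * c ^ m₂ = c ^ m := by
      have h2 : c ^ m₂ = c ^ m₁ * c ^ m := by
        rw [← pow_add]
        congr 1
        omega
      rw [h2, inv_mul_cancel_left]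
    have hcmWg : c ^ m ∈ Wg := by
      have e0 : ((c ^ m₁, c ^ m₂) : G × G) ∈ V ×ˢ V' := ⟨hm₁.1, hm₂.2⟩
      have e1 : (c ^ m₁)⁻¹ * c ^ m₂ ∈ Wg := hVsub e0
      rw [← hpow]
      exact e1
    -- now use the isolation to show μ i ^ m = 1
    intro i
    have hd : c ^ m * q (f i) * (c ^ m)⁻¹ = q (f i) := hcZpow m i
    have hxker : q (s₁ (c ^ m) * f i * (s₁ (c ^ m))⁻¹ * (f i)⁻¹) = 1 := by
      simp only [map_mul, map_inv, hs₁sect _ hcmWg.1]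
      rw [hd, mul_inv_cancel]
    have hx1 : s₁ (c ^ m) * f i * (s₁ (c ^ m))⁻¹ * (f i)⁻¹ = 1 :=
      hOisol _ (hcmWg.2 i) hxker
    -- rewrite the lift of c^m in terms of ℓ^m
    set z : H := (ℓ ^ m)⁻¹ * s₁ (c ^ m) with hzdef
    have hzker : q z = 1 := by
      rw [hzdef, map_mul, map_inv, map_pow, hℓ, hs₁sect _ hcmWg.1, inv_mul_cancel]
    have hzc : ∀ x : H, x * z = z * x := aux_central' q hqcov hzker
    have hw : s₁ (c ^ m) = ℓ ^ m * z := by rw [hzdef]; group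
    have h5 : z * f i = f i * z := (hzc (f i)).symm
    have hzf : z * f i * z⁻¹ = f i := by rw [h5]; group
    have hkey2 : s₁ (c ^ m) * f i * (s₁ (c ^ m))⁻¹ * (f i)⁻¹
        = ℓ ^ m * f i * (ℓ ^ m)⁻¹ * (f i)⁻¹ := by
      rw [hw]
      calc ℓ ^ m * z * f i * (ℓ ^ m * z)⁻¹ * (f i)⁻¹
          = ℓ ^ m * (z * f i * z⁻¹) * (ℓ ^ m)⁻¹ * (f i)⁻¹ := by group
        _ = ℓ ^ m * f i * (ℓ ^ m)⁻¹ * (f i)⁻¹ := by rw [hzf]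
    have hμm : μ i ^ m = 1 := by
      rw [← hμcomm i m, ← hkey2]
      exact hx1
    exact aux_torsionfree' htf q hqc hqcov (hμker i) hmpos hμm
  -- final contradiction using continuity of the recovery map at (f, c, f)
  have hsA : ContinuousAt s c := hscont.continuousAt (hUopen.mem_nhds hcU)
  set Φ : (Fin r → H) × G × (Fin r → H) → Fin r → H :=
    fun pp i => pp.1 i * (s pp.2.1 * (pp.2.2 i)⁻¹ * (s pp.2.1)⁻¹) with hΦdef
  have hΦA : ContinuousAt Φ (f, c, f) := by
    apply continuousAt_pi.mpr
    intro i
    have h1 : ContinuousAt (fun pp : (Fin r → H) × G × (Fin r → H) => s pp.2.1) (f, c, f) :=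
      hsA.comp (continuous_fst.comp continuous_snd).continuousAt
    exact (((continuous_apply i).comp continuous_fst).continuousAt).mul
      ((h1.mul (((continuous_apply i).comp
        (continuous_snd.comp continuous_snd)).continuousAt.inv)).mul h1.inv)
  have hval : Φ (f, c, f) = fun _ => 1 := by
    funext i
    show f i * (s c * (f i)⁻¹ * (s c)⁻¹) = 1
    rw [hsc]
    have h6 : ℓ * f i = f i * ℓ := by
      have := hμ1 i
      rw [hμdef] at this
      have h7 : ℓ * f i * ℓ⁻¹ * (f i)⁻¹ = 1 := this
      calc ℓ * f i = (ℓ * f i * ℓ⁻¹ * (f i)⁻¹) * (f i * ℓ) := by group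
        _ = f i * ℓ := by rw [h7, one_mul]
    calc f i * (ℓ * (f i)⁻¹ * ℓ⁻¹) = (f i * ℓ) * (f i)⁻¹ * ℓ⁻¹ := by group
      _ = (ℓ * f i) * (f i)⁻¹ * ℓ⁻¹ := by rw [h6]
      _ = 1 := by group
  have hΩ : {v : Fin r → H | ∀ i, v i ∈ O} ∈ 𝓝 (Φ (f, c, f)) := by
    rw [hval]
    have hopen : IsOpen {v : Fin r → H | ∀ i, v i ∈ O} := by
      have : {v : Fin r → H | ∀ i, v i ∈ O} = Set.pi Set.univ (fun _ => O) := by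
        ext v; simp [Set.mem_pi]
      rw [this]
      exact isOpen_set_pi Set.finite_univ (fun _ _ => hOopen)
    exact hopen.mem_nhds (fun i => hO1)
  have hpre := hΦA hΩ
  obtain ⟨A, hA, B, hB, hABsub⟩ := mem_nhds_prod_iff.mp hpre
  obtain ⟨U₂, hU₂, N₃, hN₃, hBsub⟩ := mem_nhds_prod_iff.mp hB
  have hU₃ : U₂ ∩ U ∈ 𝓝 c := Filter.inter_mem hU₂ (hUopen.mem_nhds hcU)
  have hN₄ : A ∩ N₃ ∈ 𝓝 f := Filter.inter_mem hA hN₃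
  obtain ⟨u, hu, h, k, g, hueq, hk, hkne, hg, hkg⟩ := hcluster _ hU₃ _ hN₄
  subst hueq
  -- the algebraic identity recovering k
  have hqhU : q h ∈ U := hu.2
  set w : H := s (q h) with hwdef
  have hqw : q w = q h := hssect _ hqhU
  set z : H := w⁻¹ * h with hzdef
  have hzker : q z = 1 := by rw [hzdef, map_mul, map_inv, hqw, inv_mul_cancel]
  have hzc : ∀ x : H, x * z = z * x := aux_central' q hqcov hzker
  have hconj : ∀ i, h * g i * h⁻¹ = w * g i * w⁻¹ := by
    intro i
    have hh : h = w * z := by rw [hzdef]; group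
    calc h * g i * h⁻¹ = w * (z * g i * z⁻¹) * w⁻¹ := by rw [hh]; group
      _ = w * g i * w⁻¹ := by
        rw [show z * g i * z⁻¹ = g i from by rw [← hzc (g i)]; group]
  have hkey : ∀ i, k i = (k i * (h * g i * h⁻¹)) * (w * (g i)⁻¹ * w⁻¹) := by
    intro i
    rw [hconj i]
    group
  have hmem : Φ ((fun i => k i * (h * g i * h⁻¹)), q h, g) ∈ {v : Fin r → H | ∀ i, v i ∈ O} := by
    apply hABsub
    refine ⟨hkg.1, ?_⟩
    exact hBsub ⟨hu.1, hg.2⟩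
  have hk1 : ∀ i, k i = 1 := by
    intro i
    have h8 := hmem i
    have h9 : Φ ((fun i => k i * (h * g i * h⁻¹)), q h, g) i = k i := by
      show (k i * (h * g i * h⁻¹)) * (s (q h) * (g i)⁻¹ * (s (q h))⁻¹) = k i
      rw [← hwdef, ← hkey i]
    rw [h9] at h8
    exact hOisol _ h8 (hk i)
  exact hkne (funext hk1)

end

end Statement2Aux

/-- Let `q : H → G` be a covering homomorphism with `H` connected and
simply connected and `G` a compact connected Lie group with torsion-free `π₁`.  The
coordinatewise multiplication action of `(ker q)^r` on the simultaneous-conjugation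
quotient `H^r/H` is properly discontinuous: every point has an open neighborhood `V`
with `k · V ∩ V = ∅` for every nontrivial `k ∈ (ker q)^r`. -/
theorem statement2
    {E : Type*} [NormedAddCommGroup E] [NormedSpace ℝ E] [FiniteDimensional ℝ E]
    {G : Type*} [TopologicalSpace G] [ChartedSpace E G] [Group G] [IsTopologicalGroup G]
    [LieGroup (modelWithCornersSelf ℝ E) (⊤ : ℕ∞) G] [CompactSpace G] [ConnectedSpace G]
    (htf : Monoid.IsTorsionFree (FundamentalGroup G (1 : G)))
    {H : Type*} [Group H] [TopologicalSpace H] [IsTopologicalGroup H]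
    [ConnectedSpace H] [SimplyConnectedSpace H]
    (q : H →* G) (hqc : Continuous q) (hqs : Function.Surjective q)
    (hqcov : IsCoveringMap q) (r : ℕ) :
    ∀ x : Quotient (simConjSetoid r H), ∃ V : Set (Quotient (simConjSetoid r H)),
      IsOpen V ∧ x ∈ V ∧
        ∀ k : Fin r → H, (∀ i, k i ∈ q.ker) → k ≠ (fun _ => 1) →
          ∀ f : Fin r → H, Quotient.mk (simConjSetoid r H) f ∈ V →
            Quotient.mk (simConjSetoid r H) (fun i => k i * f i) ∉ V := by
  classical
  haveI : T2Space G := Statement2Aux.aux_t2 (E := E)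
  intro x
  obtain ⟨f, rfl⟩ := Quotient.exists_rep x
  obtain ⟨N, hNopen, hfN, hNmain⟩ :=
    Statement2Aux.aux_main htf q hqc hqs hqcov r f
  refine ⟨Quotient.mk (simConjSetoid r H) '' N, ?_, ⟨f, hfN, rfl⟩, ?_⟩
  · -- openness of the image
    have hpreopen : IsOpen (Quotient.mk (simConjSetoid r H) ⁻¹'
        (Quotient.mk (simConjSetoid r H) '' N)) := by
      have hset : Quotient.mk (simConjSetoid r H) ⁻¹'
          (Quotient.mk (simConjSetoid r H) '' N) =
          ⋃ (h : H), (fun (g : Fin r → H) (i : Fin r) => h * g i * h⁻¹) ⁻¹' N := by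
        ext g
        simp only [Set.mem_preimage, Set.mem_image, Set.mem_iUnion]
        constructor
        · rintro ⟨g', hg'N, heq⟩
          obtain ⟨h, hh⟩ := Quotient.exact heq
          refine ⟨h, ?_⟩
          show (fun i => h * g i * h⁻¹) ∈ N
          rw [hh]
          exact hg'N
        · rintro ⟨h, hh⟩
          exact ⟨_, hh, Quotient.sound ⟨h, rfl⟩⟩
      rw [hset]
      refine isOpen_iUnion (fun h => hNopen.preimage ?_)
      fun_prop
    exact isQuotientMap_quotient_mk'.isOpen_preimage.mp hpreopen
  · intro k hker hkne f' hf' hcontra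
    obtain ⟨g, hgN, hgeq⟩ := hf'
    obtain ⟨h₁, hh₁⟩ := Quotient.exact hgeq
    obtain ⟨g₂, hg₂N, hg₂eq⟩ := hcontra
    obtain ⟨h₂, hh₂⟩ := Quotient.exact hg₂eq
    have hkerq : ∀ i, q (k i) = 1 := fun i => MonoidHom.mem_ker.mp (hker i)
    have hcent : ∀ (i : Fin r) (x : H), x * k i = k i * x :=
      fun i => Statement2Aux.aux_central' q hqcov (hkerq i)
    apply hkne
    refine hNmain k (h₂ * h₁⁻¹) g hkerq hgN ?_
    have hgi : ∀ i, g i = h₁ * f' i * h₁⁻¹ := fun i => (congrFun hh₁ i).symm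
    have : (fun i => k i * ((h₂ * h₁⁻¹) * g i * (h₂ * h₁⁻¹)⁻¹)) = g₂ := by
      funext i
      rw [← congrFun hh₂ i, hgi i]
      show k i * (h₂ * h₁⁻¹ * (h₁ * f' i * h₁⁻¹) * (h₂ * h₁⁻¹)⁻¹) = h₂ * (k i * f' i) * h₂⁻¹
      calc k i * (h₂ * h₁⁻¹ * (h₁ * f' i * h₁⁻¹) * (h₂ * h₁⁻¹)⁻¹)
          = k i * (h₂ * f' i * h₂⁻¹) := by group
        _ = (k i * h₂) * f' i * h₂⁻¹ := by group
        _ = (h₂ * k i) * f' i * h₂⁻¹ := by rw [← hcent i h₂]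
        _ = h₂ * (k i * f' i) * h₂⁻¹ := by group
    rw [this]
    exact hg₂N
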